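/- Let 0 < β < 1, σ > 0, γ > 0, π ≥ 0, δ* > 0, ρ > 0, c₀ > 0, k₀ > 0, z₀ > 0, and set ξ := (δ* + π(1−β))/β − (δ*−ρ)/σ and K := k₀/(c₀·z₀^{(β−σ)/σ}). Let z : ℝ → ℝ be continuous differentiable with z(t) > 0, z(0) = z₀ and z'(t)/z(t) = (δ*+π)/β − γ·z(t)^{1−β} for all t ≥ 0. Define F(t) := ∫₀ᵗ z(s)^{(σ−β)/σ}·e^{−ξ s} ds, c(t) := c₀·z₀^{β/σ}·e^{−((ρ−δ*)/σ)t}·z(t)^{−β/σ}, and k(t) := (K − F(t))·c₀·z₀^{β/σ}·z(t)^{−1}·e^{((δ*+π−πβ)/β)t}, and assume K − F(t) > 0 for all t ≥ 0. Then k(0) = k₀ and for all t ≥ 0, k'(t) = γ·z(t)^{1−β}·k(t) − π·k(t) − c(t). -/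

import Mathlib

/-- The physical-capital component of the second and third closed-form solutions
of the transformed Lucas-Uzawa model satisfies the resource constraint
k' = γz^{1-β}k - πk - c and the initial condition k(0) = k₀. -/
theorem k_component (β σ γ pi δs ρ c0 k0 z0 : ℝ)
    (hβ0 : 0 < β) (hβ1 : β < 1) (hσ : 0 < σ) (hγ : 0 < γ) (hpi : 0 ≤ pi)
    (hδs : 0 < δs) (hρ : 0 < ρ) (hc0 : 0 < c0) (hk0 : 0 < k0) (hz0 : 0 < z0)
    (ξ K : ℝ)
    (hξ : ξ = (δs + pi * (1 - β)) / β - (δs - ρ) / σ)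
    (hK : K = k0 / (c0 * z0 ^ ((β - σ) / σ)))
    (z : ℝ → ℝ) (hzd : Differentiable ℝ z) (hzpos : ∀ t ≥ (0:ℝ), 0 < z t)
    (hzinit : z 0 = z0)
    (hzode : ∀ t ≥ (0:ℝ), deriv z t / z t = (δs + pi) / β - γ * z t ^ (1 - β))
    (F c k : ℝ → ℝ)
    (hF : ∀ t, F t = ∫ s in (0:ℝ)..t, z s ^ ((σ - β) / σ) * Real.exp (-ξ * s))
    (hc : ∀ t, c t = c0 * z0 ^ (β / σ) * Real.exp (-((ρ - δs) / σ) * t)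
      * z t ^ (-(β / σ)))
    (hk : ∀ t, k t = (K - F t) * c0 * z0 ^ (β / σ) * z t ^ (-(1:ℝ))
      * Real.exp ((δs + pi - pi * β) / β * t))
    (hKF : ∀ t ≥ (0:ℝ), 0 < K - F t) :
    k 0 = k0 ∧
    (∀ t ≥ (0:ℝ), deriv k t = γ * z t ^ (1 - β) * k t - pi * k t - c t) := by
  have hσ' : σ ≠ 0 := ne_of_gt hσ
  have hβ' : β ≠ 0 := ne_of_gt hβ0
  have hzc : Continuous z := hzd.continuous
  constructor
  · rw [hk 0, hF 0, intervalIntegral.integral_same, hzinit, hK]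
    have h1 : z0 ^ (β / σ) * z0 ^ (-(1:ℝ)) = z0 ^ ((β - σ) / σ) := by
      rw [← Real.rpow_add hz0]; congr 1; field_simp; ring
    have h2 : (0:ℝ) < z0 ^ ((β - σ) / σ) := Real.rpow_pos_of_pos hz0 _
    simp only [mul_zero, Real.exp_zero, sub_zero, mul_one]
    calc k0 / (c0 * z0 ^ ((β - σ) / σ)) * c0 * z0 ^ (β / σ) * z0 ^ (-(1:ℝ))
        = k0 / (c0 * z0 ^ ((β - σ) / σ)) * c0 * (z0 ^ (β / σ) * z0 ^ (-(1:ℝ))) := by ring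
      _ = k0 := by rw [h1]; field_simp
  · intro t ht
    have hzt : 0 < z t := hzpos t ht
    -- the integrand of F
    set f : ℝ → ℝ := fun s => z s ^ ((σ - β) / σ) * Real.exp (-ξ * s) with hfdef
    have hFfun : F = fun u => ∫ s in (0:ℝ)..u, f s := funext hF
    -- derivative of F at t
    have hUopen : IsOpen (z ⁻¹' Set.Ioi 0) := (isOpen_Ioi).preimage hzc
    have hmeasf : StronglyMeasurableAtFilter f (nhds t) MeasureTheory.volume := by
      refine ContinuousOn.stronglyMeasurableAtFilter hUopen ?_ t hzt
      intro x hx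
      apply ContinuousWithinAt.mul
      · exact (ContinuousAt.rpow_const (hzc.continuousAt) (Or.inl (ne_of_gt hx))).continuousWithinAt
      · exact (Continuous.continuousAt (by continuity)).continuousWithinAt
    have hint : IntervalIntegrable f MeasureTheory.volume 0 t := by
      apply ContinuousOn.intervalIntegrable
      rw [Set.uIcc_of_le ht]
      apply ContinuousOn.mul
      · exact ContinuousOn.rpow_const hzc.continuousOn
          (fun x hx => Or.inl (ne_of_gt (hzpos x hx.1)))
      · exact Continuous.continuousOn (by continuity)
    have hcontf : ContinuousAt f t := by
      apply ContinuousAt.mul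
      · exact ContinuousAt.rpow_const hzc.continuousAt (Or.inl (ne_of_gt hzt))
      · exact Continuous.continuousAt (by continuity)
    have hFd : HasDerivAt F (f t) t := by
      rw [hFfun]
      exact intervalIntegral.integral_hasDerivAt_right hint
        hmeasf hcontf
    -- rewrite k as an explicit function
    have hkfun : k = fun s => (K - F s) * c0 * z0 ^ (β / σ) * (z s)⁻¹
        * Real.exp ((δs + pi - pi * β) / β * s) := by
      funext s; rw [hk s, Real.rpow_neg_one]
    -- derivative of k at t
    have hkd : HasDerivAt k
        ((-(f t) * c0 * z0 ^ (β / σ) * (z t)⁻¹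
          + (K - F t) * c0 * z0 ^ (β / σ) * (-(deriv z t) / z t ^ 2))
           * Real.exp ((δs + pi - pi * β) / β * t)
         + (K - F t) * c0 * z0 ^ (β / σ) * (z t)⁻¹
           * (Real.exp ((δs + pi - pi * β) / β * t) * ((δs + pi - pi * β) / β * 1))) t := by
      rw [hkfun]
      exact ((((hFd.const_sub K).mul_const c0).mul_const (z0 ^ (β / σ))).mul
        ((hzd t).hasDerivAt.inv (ne_of_gt hzt))).mul
        (((hasDerivAt_id t).const_mul ((δs + pi - pi * β) / β)).exp)
    rw [hkd.deriv, hk t, hc t, Real.rpow_neg_one]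
    -- value of deriv z
    have hz' : deriv z t = ((δs + pi) / β - γ * z t ^ (1 - β)) * z t := by
      have h := hzode t ht
      rw [div_eq_iff (ne_of_gt hzt)] at h
      exact h
    -- rpow splitting for c
    have hr1 : z t ^ (-(β / σ)) = z t ^ ((σ - β) / σ) * (z t)⁻¹ := by
      rw [← Real.rpow_neg_one (z t), ← Real.rpow_add hzt]
      congr 1; field_simp; ring
    -- exponential splitting for c
    have hr2 : Real.exp (-((ρ - δs) / σ) * t)
        = Real.exp (-ξ * t) * Real.exp ((δs + pi - pi * β) / β * t) := by
      rw [← Real.exp_add]; congr 1; rw [hξ]; ring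
    rw [hz', hr1, hr2, hfdef]
    have h2 : (z t) ^ 2 ≠ 0 := pow_ne_zero _ (ne_of_gt hzt)
    field_simp
    ring
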